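/- Suppose A receives a votes each of weight 1 and B receives b' votes with positive real weights summing to b, where a, b are integers and μ is a positive real with a > μb. Then for any fixed arrangement of the a + b' votes, at least a - ⌊μb⌋ of its a + b' cyclic permutations satisfy a_r > μ·b_r for all 1 ≤ r ≤ a + b'; consequently P ≥ (a - ⌊μb⌋)/(a + b'). -/

import Mathlib

/-- In the base labeling of the `a + bp` votes, positions `< a` are A-votes (weight 1)
and position `a + k` is B's `k`-th vote, of weight `w k`. The weight contributed to B
by the vote labeled `j` : -/
def bWeight (a bp : ℕ) (w : Fin bp → ℝ) (j : Fin (a + bp)) : ℝ :=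
  if h : j.val < a then 0 else w ⟨j.val - a, by omega⟩

/-- Number of A-votes among the first `r` positions of the arrangement `τ`. -/
def wcountA (a bp : ℕ) (τ : Fin (a + bp) → Fin (a + bp)) (r : ℕ) : ℕ :=
  (Finset.univ.filter (fun i : Fin (a + bp) => i.val < r ∧ (τ i).val < a)).card

/-- Total weight of B-votes among the first `r` positions of the arrangement `τ`. -/
noncomputable def wcountB (a bp : ℕ) (w : Fin bp → ℝ) (τ : Fin (a + bp) → Fin (a + bp))
    (r : ℕ) : ℝ :=
  ∑ i ∈ Finset.univ.filter (fun i : Fin (a + bp) => i.val < r), bWeight a bp w (τ i)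

/-- Cyclic shift of an arrangement, moving the first `i` votes to the end. -/
def cycf {n : ℕ} (τ : Fin n → Fin n) (i : ℕ) : Fin n → Fin n :=
  fun j => τ ⟨(j.val + i) % n, Nat.mod_lt _ (Nat.lt_of_le_of_lt (Nat.zero_le j.val) j.isLt)⟩


theorem cycle_core (n : ℕ) (hn : 0 < n) (u : ℕ → ℝ)
    (hper : ∀ j, u (j + n) = u j) (hu : ∀ j, u j ≤ 1)
    (T : ℝ) (hT : ∑ j ∈ Finset.range n, u j = T) (hT0 : 0 < T)
    (K : ℕ) (hK : (K : ℝ) < T + 1)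
    (p : ℕ → Prop) [DecidablePred p]
    (hp : ∀ i, (∀ r, 1 ≤ r → r ≤ n → 0 < ∑ j ∈ Finset.range r, u (i + j)) → p i) :
    K ≤ ((Finset.range n).filter p).card := by
  classical
  set S : ℕ → ℝ := fun m => ∑ j ∈ Finset.range m, u j with hS
  have hstep : ∀ m, S (m + 1) = S m + u m := fun m => Finset.sum_range_succ u m
  have hSper : ∀ m, S (m + n) = S m + T := by
    intro m
    induction m with
    | zero => simpa [hS] using hT
    | succ m ih =>
        have h1 : m + 1 + n = (m + n) + 1 := by omega
        rw [h1, hstep, ih, hper, hstep]; ring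
  have hSq : ∀ q r, S (r + q * n) = S r + q * T := by
    intro q
    induction q with
    | zero => simp
    | succ q ih =>
        intro r
        have h1 : r + (q + 1) * n = (r + q * n) + n := by ring
        rw [h1, hSper, ih]; push_cast; ring
  -- decomposition S j = S (j % n) + (j / n) * T
  have hdec : ∀ j, S j = S (j % n) + (j / n : ℕ) * T := by
    intro j
    have := hSq (j / n) (j % n)
    have e : j % n + j / n * n = j := Nat.mod_add_div' j n
    rwa [e] at this
  -- boundedness: S j > c for j large
  have hbdd : ∀ c : ℝ, ∃ B, ∀ j, B ≤ j → c < S j := by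
    intro c
    obtain ⟨m0, hm0⟩ := (Finset.range n).exists_min_image S ⟨0, Finset.mem_range.mpr hn⟩
    obtain ⟨q, hq⟩ := exists_nat_gt ((c - S m0) / T)
    refine ⟨q * n + n, fun j hj => ?_⟩
    have hqj : q ≤ j / n := Nat.le_div_iff_mul_le hn |>.mpr (by omega)
    have h1 : S m0 ≤ S (j % n) := hm0.2 _ (Finset.mem_range.mpr (Nat.mod_lt _ hn))
    have h2 : (q : ℝ) * T ≤ (j / n : ℕ) * T := by
      apply mul_le_mul_of_nonneg_right _ hT0.le
      exact_mod_cast hqj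
    have h3 : c - S m0 < q * T := (div_lt_iff₀ hT0).mp hq
    have := hdec j
    nlinarith [this]
  -- existence of the last future minimizer
  have hNex : ∀ i, ∃ g, i < g ∧ S g ≤ S i + 1 ∧ (∀ j, i < j → S g ≤ S j) ∧
      (∀ j, g < j → S g < S j) := by
    intro i
    obtain ⟨B, hB⟩ := hbdd (S (i + 1))
    set M := max B (i + 2) with hM
    set F := (Finset.Ico (i + 1) M).filter (fun j => S j ≤ S (i + 1)) with hF
    have hi1F : i + 1 ∈ F := by
      simp [hF, Finset.mem_Ico]
      omega
    obtain ⟨jm, hjmF, hjm⟩ := F.exists_min_image S ⟨i + 1, hi1F⟩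
    set F2 := F.filter (fun j => S j = S jm) with hF2
    have hne2 : F2.Nonempty := ⟨jm, by simp [hF2, hjmF]⟩
    set g := F2.max' hne2 with hg
    have hgF2 : g ∈ F2 := F2.max'_mem hne2
    have hgF : g ∈ F := (Finset.mem_filter.mp hgF2).1
    have hgval : S g = S jm := (Finset.mem_filter.mp hgF2).2
    have hgIco := (Finset.mem_filter.mp hgF).1
    have hgle : S g ≤ S (i + 1) := (Finset.mem_filter.mp hgF).2
    have hig : i < g := by
      have := Finset.mem_Ico.mp hgIco; omega
    have hmin : ∀ j, i < j → S g ≤ S j := by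
      intro j hj
      by_cases hjM : j < M
      · by_cases hjc : S j ≤ S (i + 1)
        · have hjF : j ∈ F := by
            simp [hF, Finset.mem_Ico]
            exact ⟨⟨hj, hjM⟩, hjc⟩
          rw [hgval]; exact hjm j hjF
        · push_neg at hjc; linarith
      · have : B ≤ j := by omega
        have := hB j this
        linarith
    refine ⟨g, hig, ?_, hmin, ?_⟩
    · have : S (i + 1) = S i + u i := hstep i
      have := hu i
      linarith
    · intro j hj
      have hle : S g ≤ S j := hmin j (lt_trans hig hj)
      rcases lt_or_eq_of_le hle with h | h
      · exact h
      · exfalso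
        by_cases hjM : j < M
        · have hjF2 : j ∈ F2 := by
            have hjF : j ∈ F := by
              simp [hF, Finset.mem_Ico]
              exact ⟨⟨lt_trans hig hj, hjM⟩, by rw [← h]; exact hgle⟩
            simp [hF2, hjF]
            rw [← h, hgval]
          have := F2.le_max' j hjF2
          omega
        · have hBj := hB j (by omega)
          rw [← h] at hBj
          linarith
  choose N hN1 hN2 hN3 hN4 using hNex
  set good : ℕ → Prop := fun j => ∀ j', j < j' → S j < S j' with hgooddef
  rcases Nat.eq_zero_or_pos K with hK0 | hKpos
  · simp [hK0]
  set g : ℕ → ℕ := fun t => N^[t] (N 0) with hgdef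
  have hgsucc : ∀ t, g (t + 1) = N (g t) := fun t => Function.iterate_succ_apply' N t (N 0)
  have hggood : ∀ t, good (g t) := by
    intro t
    cases t with
    | zero => exact fun j' => hN4 0 j'
    | succ t => rw [hgsucc]; exact fun j' => hN4 (g t) j'
  have hgmono : ∀ t, g t < g (t + 1) := by
    intro t; rw [hgsucc]; exact hN1 (g t)
  have hgmono' : StrictMono g := strictMono_nat_of_lt_succ hgmono
  have hSg : ∀ t, S (g t) ≤ S (g 0) + t := by
    intro t
    induction t with
    | zero => simp
    | succ t ih =>
        have := hN2 (g t)
        rw [← hgsucc] at this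
        push_cast
        linarith
  have hbetween : ∀ t h, good h → g t < h → h < g (t + 1) → False := by
    intro t h hgh h1 h2
    have hA : S (g (t + 1)) ≤ S h := by rw [hgsucc]; exact hN3 (g t) h h1
    have hB2 : S h < S (g (t + 1)) := hgh _ h2
    linarith
  have hmember : ∀ t h, good h → g 0 < h → h ≤ g t → ∃ s, s ≤ t ∧ h = g s := by
    intro t
    induction t with
    | zero => intro h _ h1 h2; omega
    | succ t ih =>
        intro h hgh h1 h2
        rcases le_or_gt h (g t) with hle | hlt
        · obtain ⟨s, hs1, hs2⟩ := ih h hgh h1 hle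
          exact ⟨s, by omega, hs2⟩
        · rcases lt_or_eq_of_le h2 with hlt2 | heq
          · exact absurd (hbetween t h hgh hlt hlt2) (fun x => x)
          · exact ⟨t + 1, le_refl _, heq⟩
  have hgooddown : ∀ j, good (j + n) → good j := by
    intro j hgj j' hj'
    have := hgj (j' + n) (by omega)
    rw [hSper, hSper] at this
    linarith
  have hgoodmod : ∀ j, good j → good (j % n) := by
    intro j hgj
    have e : j % n + j / n * n = j := Nat.mod_add_div' j n
    have : ∀ q r, good (r + q * n) → good r := by
      intro q
      induction q with
      | zero => intro r; simpa using id
      | succ q ih =>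
          intro r h
          apply ih
          apply hgooddown
          have e2 : r + q * n + n = r + (q + 1) * n := by ring
          rwa [e2]
    exact this (j / n) (j % n) (by rwa [e])
  have hgoodup : good (g 0 + n) := by
    intro j' hj'
    have h1 : g 0 < j' - n := by omega
    have := hggood 0 _ h1
    have e : j' - n + n = j' := by omega
    have := hSper (j' - n)
    rw [e] at this
    rw [hSper]
    linarith
  -- window bound
  have hwin : g (K - 1) < g 0 + n := by
    by_contra hcon
    push_neg at hcon
    obtain ⟨s, hs1, hs2⟩ := hmember (K - 1) (g 0 + n) hgoodup (by omega) hcon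
    have h1 : S (g s) ≤ S (g 0) + s := hSg s
    have h2 : S (g 0 + n) = S (g 0) + T := hSper (g 0)
    rw [← hs2] at h1
    have h3 : (s : ℝ) ≤ (K : ℝ) - 1 := by
      have : (s : ℝ) ≤ ((K - 1 : ℕ) : ℝ) := by exact_mod_cast hs1
      have : ((K - 1 : ℕ) : ℝ) = (K : ℝ) - 1 := by
        have : 1 ≤ K := hKpos
        push_cast [Nat.cast_sub this]
        ring
      linarith
    linarith
  -- injection into the filter set
  have hmaps : ∀ t, t < K → g t % n < n ∧ ∀ r, 1 ≤ r → r ≤ n →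
      0 < ∑ j ∈ Finset.range r, u (g t % n + j) := by
    intro t ht
    refine ⟨Nat.mod_lt _ hn, ?_⟩
    intro r hr1 hr2
    have hgi : good (g t % n) := hgoodmod _ (hggood t)
    have h1 : S (g t % n) < S (g t % n + r) := hgi _ (by omega)
    have e1 : ∑ j ∈ Finset.range r, u (g t % n + j) = ∑ j ∈ Finset.Ico (g t % n) (g t % n + r), u j := by
      rw [Finset.sum_Ico_eq_sum_range]
      simp
    have e2 : ∑ j ∈ Finset.Ico (g t % n) (g t % n + r), u j = S (g t % n + r) - S (g t % n) := by
      rw [hS]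
      rw [Finset.sum_Ico_eq_sub u (by omega : g t % n ≤ g t % n + r)]
    rw [e1, e2]
    linarith
  have hinj : ∀ t ∈ Finset.range K, ∀ t' ∈ Finset.range K, g t % n = g t' % n → t = t' := by
    intro t ht t' ht' heq
    rw [Finset.mem_range] at ht ht'
    by_contra hne
    wlog hlt : t < t' generalizing t t'
    · exact this t' ht' t ht heq.symm (Ne.symm hne) (by omega)
    have h1 : g t < g t' := hgmono' hlt
    have h2 : g t' < g t + n := by
      have ha1 : g 0 ≤ g t := hgmono'.monotone (Nat.zero_le t)
      have ha2 : g t' ≤ g (K - 1) := hgmono'.monotone (by omega)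
      omega
    have hdvd : n ∣ g t' - g t := (Nat.modEq_iff_dvd' h1.le).mp heq
    have := Nat.le_of_dvd (by omega) hdvd
    omega
  calc K = (Finset.range K).card := (Finset.card_range K).symm
    _ ≤ _ := by
        apply Finset.card_le_card_of_injOn (fun t => g t % n) _ hinj
        intro t ht
        rw [Finset.mem_coe, Finset.mem_range] at ht
        rw [Finset.mem_coe, Finset.mem_filter, Finset.mem_range]
        obtain ⟨h1, h2⟩ := hmaps t ht
        exact ⟨h1, hp _ h2⟩

open Classical in
theorem part1 (a b bp : ℕ) (μ : ℝ) (hμ : 0 < μ)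
    (ha : 0 < a) (hbp : 0 < bp) (w : Fin bp → ℝ) (hw : ∀ k, 0 < w k)
    (hsum : ∑ k, w k = (b : ℝ)) (hab : μ * b < a)
    (τ : Fin (a + bp) → Fin (a + bp)) (hτ : Function.Bijective τ) :
    (a : ℤ) - ⌊μ * (b : ℝ)⌋ ≤
      ((Finset.range (a + bp)).filter (fun i =>
        ∀ r, 1 ≤ r → r ≤ a + bp →
          μ * wcountB a bp w (cycf τ i) r < (wcountA a bp (cycf τ i) r : ℝ))).card := by
  have hn : 0 < a + bp := by omega
  set v : Fin (a + bp) → ℝ :=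
    fun x => (if x.val < a then 1 else 0) - μ * bWeight a bp w x with hv
  set u : ℕ → ℝ := fun m => v (τ ⟨m % (a + bp), Nat.mod_lt _ hn⟩) with hu'
  have hper : ∀ j, u (j + (a + bp)) = u j := by
    intro j
    simp only [hu']
    congr 2
    exact Fin.ext (by simp [Nat.add_mod_right])
  have hvle : ∀ x, v x ≤ 1 := by
    intro x
    simp only [hv]
    unfold bWeight
    by_cases h : x.val < a
    · simp [h]
    · rw [dif_neg h, if_neg h]
      have := hw ⟨x.val - a, by omega⟩
      nlinarith
  have hule : ∀ j, u j ≤ 1 := fun j => hvle _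
  set T : ℝ := (a : ℝ) - μ * b with hTdef
  have hT0 : 0 < T := by simp only [hTdef]; linarith
  set w' : ℕ → ℝ := fun k => if h : k < bp then w ⟨k, h⟩ else 0 with hw'
  have hbW : ∀ x : Fin (a + bp), bWeight a bp w x = if x.val < a then 0 else w' (x.val - a) := by
    intro x
    unfold bWeight
    by_cases h : x.val < a
    · simp [h]
    · rw [dif_neg h, if_neg h]
      have hlt : x.val - a < bp := by omega
      simp [hw', hlt]
  have hsumv : ∑ x : Fin (a + bp), v x = T := by
    have h1 : ∑ x : Fin (a + bp), (if x.val < a then (1:ℝ) else 0) = a := by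
      rw [Fin.sum_univ_eq_sum_range (fun j => if j < a then (1:ℝ) else 0) (a + bp)]
      rw [← Finset.sum_filter]
      have : (Finset.range (a + bp)).filter (fun j => j < a) = Finset.range a := by
        ext j; simp; omega
      rw [this]; simp
    have h2 : ∑ x : Fin (a + bp), bWeight a bp w x = b := by
      have e1 : ∑ x : Fin (a + bp), bWeight a bp w x
          = ∑ j ∈ Finset.range (a + bp), (if j < a then 0 else w' (j - a)) := by
        rw [← Fin.sum_univ_eq_sum_range (fun j => if j < a then (0:ℝ) else w' (j - a)) (a + bp)]
        exact Finset.sum_congr rfl (fun x _ => hbW x)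
      rw [e1]
      rw [Finset.range_eq_Ico,
        ← Finset.sum_Ico_consecutive _ (Nat.zero_le a) (by omega : a ≤ a + bp)]
      have e2 : ∑ j ∈ Finset.Ico 0 a, (if j < a then (0:ℝ) else w' (j - a)) = 0 := by
        apply Finset.sum_eq_zero
        intro j hj
        rw [Finset.mem_Ico] at hj
        simp [hj.2]
      have e3 : ∑ j ∈ Finset.Ico a (a + bp), (if j < a then (0:ℝ) else w' (j - a))
          = ∑ k ∈ Finset.range bp, w' k := by
        rw [Finset.sum_Ico_eq_sum_range]
        have hd : a + bp - a = bp := by omega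
        rw [hd]
        apply Finset.sum_congr rfl
        intro k _
        rw [if_neg (by omega)]
        congr 1
        omega
      rw [e2, e3, ← Fin.sum_univ_eq_sum_range w' bp, zero_add]
      rw [← hsum]
      apply Finset.sum_congr rfl
      intro k _
      simp [hw']
    simp only [hv, Finset.sum_sub_distrib, ← Finset.mul_sum, h1, h2, hTdef]
  have hT : ∑ j ∈ Finset.range (a + bp), u j = T := by
    rw [← Fin.sum_univ_eq_sum_range (fun j => u j) (a + bp)]
    have e : ∀ i : Fin (a + bp), u i.val = v (τ i) := by
      intro i
      simp only [hu']
      congr 2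
      exact Fin.ext (by simp [Nat.mod_eq_of_lt i.isLt])
    rw [Finset.sum_congr rfl (fun i _ => e i)]
    rw [Fintype.sum_bijective τ hτ _ _ (fun x => rfl)]
    exact hsumv
  have hfl0 : 0 ≤ ⌊μ * (b:ℝ)⌋ := Int.floor_nonneg.mpr (by positivity)
  have hfla : ⌊μ * (b:ℝ)⌋ < (a : ℤ) := by
    have h1 : (⌊μ * (b:ℝ)⌋ : ℝ) ≤ μ * b := Int.floor_le _
    have h2 : (⌊μ * (b:ℝ)⌋ : ℝ) < a := by linarith
    exact_mod_cast h2
  set K : ℕ := a - (⌊μ * (b:ℝ)⌋).toNat with hKdef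
  have hKr : (K : ℝ) = (a : ℝ) - (⌊μ * (b:ℝ)⌋ : ℤ) := by
    have : (K : ℤ) = (a : ℤ) - ⌊μ * (b:ℝ)⌋ := by omega
    exact_mod_cast congrArg (Int.cast : ℤ → ℝ) this
  have hK : (K : ℝ) < T + 1 := by
    rw [hKr, hTdef]
    have := Int.lt_floor_add_one (μ * (b:ℝ))
    push_cast
    linarith
  have hbridge : ∀ i r, r ≤ a + bp →
      (wcountA a bp (cycf τ i) r : ℝ) - μ * wcountB a bp w (cycf τ i) r
        = ∑ j ∈ Finset.range r, u (i + j) := by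
    intro i r hr
    have hA : (wcountA a bp (cycf τ i) r : ℝ)
        = ∑ x ∈ Finset.univ.filter (fun x : Fin (a + bp) => x.val < r),
            (if ((cycf τ i) x).val < a then (1:ℝ) else 0) := by
      rw [wcountA, ← Finset.filter_filter, Finset.card_filter]
      push_cast
      rfl
    rw [hA, wcountB, Finset.mul_sum, ← Finset.sum_sub_distrib]
    have e1 : ∀ x : Fin (a + bp), (if ((cycf τ i) x).val < a then (1:ℝ) else 0)
        - μ * bWeight a bp w ((cycf τ i) x) = u (i + x.val) := by
      intro x
      simp only [hu', hv, cycf]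
      congr 3 <;>
      · congr 1
        exact Fin.ext (by simp [Nat.add_comm i x.val])
    rw [Finset.sum_congr rfl (fun x _ => e1 x)]
    rw [Finset.sum_filter]
    rw [Fin.sum_univ_eq_sum_range (fun j => if j < r then u (i + j) else 0) (a + bp)]
    rw [← Finset.sum_filter]
    congr 1
    ext j
    simp only [Finset.mem_filter, Finset.mem_range]
    omega
  have hcore := cycle_core (a + bp) hn u hper hule T hT hT0 K hK
    (fun i => ∀ r, 1 ≤ r → r ≤ a + bp →
      μ * wcountB a bp w (cycf τ i) r < (wcountA a bp (cycf τ i) r : ℝ))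
    (by
      intro i hpos r hr1 hr2
      have := hbridge i r hr2
      have h2 := hpos r hr1 hr2
      linarith)
  have hKZ : (a : ℤ) - ⌊μ * (b:ℝ)⌋ = (K : ℤ) := by omega
  rw [hKZ]
  exact_mod_cast hcore

open Classical in
theorem part2 (a b bp : ℕ) (μ : ℝ) (hμ : 0 < μ)
    (ha : 0 < a) (hbp : 0 < bp) (w : Fin bp → ℝ) (hw : ∀ k, 0 < w k)
    (hsum : ∑ k, w k = (b : ℝ)) (hab : μ * b < a) :
    ((a : ℝ) - (⌊μ * (b : ℝ)⌋ : ℝ)) / ((a : ℝ) + bp) ≤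
      (((Finset.univ.filter (fun σ : Equiv.Perm (Fin (a + bp)) =>
          ∀ r, 1 ≤ r → r ≤ a + bp →
            μ * wcountB a bp w (⇑σ) r < (wcountA a bp (⇑σ) r : ℝ))).card : ℝ) /
        ((Finset.univ : Finset (Equiv.Perm (Fin (a + bp)))).card : ℝ)) := by
  have hn : 0 < a + bp := by omega
  haveI : NeZero (a + bp) := ⟨by omega⟩
  set Good : (Fin (a + bp) → Fin (a + bp)) → Prop := fun f =>
    ∀ r, 1 ≤ r → r ≤ a + bp →
      μ * wcountB a bp w f r < (wcountA a bp f r : ℝ) with hGood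
  -- floor facts
  have hfl0 : 0 ≤ ⌊μ * (b:ℝ)⌋ := Int.floor_nonneg.mpr (by positivity)
  have hfla : ⌊μ * (b:ℝ)⌋ < (a : ℤ) := by
    have h1 : (⌊μ * (b:ℝ)⌋ : ℝ) ≤ μ * b := Int.floor_le _
    have h2 : (⌊μ * (b:ℝ)⌋ : ℝ) < a := by linarith
    exact_mod_cast h2
  set K : ℕ := a - (⌊μ * (b:ℝ)⌋).toNat with hKdef
  -- per-permutation bound in ℕ
  have hone : ∀ σ : Equiv.Perm (Fin (a + bp)),
      K ≤ ((Finset.range (a + bp)).filter (fun i => Good (cycf (⇑σ) i))).card := by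
    intro σ
    have h := part1 a b bp μ hμ ha hbp w hw hsum hab (⇑σ) σ.bijective
    have hKZ : ((K : ℤ)) = (a : ℤ) - ⌊μ * (b:ℝ)⌋ := by omega
    rw [← hKZ] at h
    rw [Finset.filter_congr_decidable] at h
    exact_mod_cast h
  -- rotation permutations
  have hrot : ∀ (i : ℕ) (hi : i < a + bp), ∀ σ : Equiv.Perm (Fin (a + bp)),
      cycf (⇑σ) i = ⇑(σ * Equiv.addRight (⟨i, hi⟩ : Fin (a + bp))) := by
    intro i hi σ
    funext x
    simp only [cycf, Equiv.Perm.coe_mul, Function.comp_apply, Equiv.coe_addRight]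
    congr 1
    all_goals first
      | rfl
      | exact Fin.ext (by simp [Fin.add_def])
  -- for each shift amount, as many good shifted perms as good perms
  have hcard : ∀ i ∈ Finset.range (a + bp),
      (Finset.univ.filter (fun σ : Equiv.Perm (Fin (a + bp)) => Good (cycf (⇑σ) i))).card
        = (Finset.univ.filter (fun σ : Equiv.Perm (Fin (a + bp)) => Good ⇑σ)).card := by
    intro i hi
    rw [Finset.mem_range] at hi
    set ρ : Equiv.Perm (Fin (a + bp)) := Equiv.addRight (⟨i, hi⟩ : Fin (a + bp)) with hρ
    apply Finset.card_bij' (fun σ _ => σ * ρ) (fun σ _ => σ * ρ⁻¹)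
    · intro σ hσ
      rw [Finset.mem_filter] at hσ ⊢
      refine ⟨Finset.mem_univ _, ?_⟩
      rw [hrot i hi σ] at hσ
      exact hσ.2
    · intro σ hσ
      rw [Finset.mem_filter] at hσ ⊢
      refine ⟨Finset.mem_univ _, ?_⟩
      rw [hrot i hi (σ * ρ⁻¹)]
      rw [mul_assoc, inv_mul_cancel, mul_one]
      exact hσ.2
    · intro σ _; simp [mul_assoc]
    · intro σ _; simp [mul_assoc]
  -- double counting
  set G : ℕ := (Finset.univ.filter
      (fun σ : Equiv.Perm (Fin (a + bp)) => Good ⇑σ)).card with hGdef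
  set P : ℕ := (Finset.univ : Finset (Equiv.Perm (Fin (a + bp)))).card with hPdef
  have hsum1 : P * K ≤
      ∑ σ : Equiv.Perm (Fin (a + bp)),
        ((Finset.range (a + bp)).filter (fun i => Good (cycf (⇑σ) i))).card := by
    calc P * K = ∑ _σ : Equiv.Perm (Fin (a + bp)), K := by
          rw [Finset.sum_const, smul_eq_mul]
      _ ≤ _ := Finset.sum_le_sum (fun σ _ => hone σ)
  have hsum2 : ∑ σ : Equiv.Perm (Fin (a + bp)),
      ((Finset.range (a + bp)).filter (fun i => Good (cycf (⇑σ) i))).card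
      = (a + bp) * G := by
    have e1 : ∀ σ : Equiv.Perm (Fin (a + bp)),
        ((Finset.range (a + bp)).filter (fun i => Good (cycf (⇑σ) i))).card
          = ∑ i ∈ Finset.range (a + bp), if Good (cycf (⇑σ) i) then 1 else 0 :=
      fun σ => Finset.card_filter _ _
    rw [Finset.sum_congr rfl (fun σ _ => e1 σ), Finset.sum_comm]
    have e2 : ∀ i ∈ Finset.range (a + bp),
        ∑ σ : Equiv.Perm (Fin (a + bp)), (if Good (cycf (⇑σ) i) then 1 else 0) = G := by
      intro i hi
      rw [← Finset.card_filter]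
      exact hcard i hi
    rw [Finset.sum_congr rfl e2, Finset.sum_const, Finset.card_range, smul_eq_mul]
  have hmain : P * K ≤ (a + bp) * G := by rw [← hsum2]; exact hsum1
  -- conclude over ℝ
  have hPpos : 0 < P := Finset.card_pos.mpr ⟨1, Finset.mem_univ _⟩
  have hKr : ((a : ℝ) - (⌊μ * (b:ℝ)⌋ : ℤ)) = (K : ℝ) := by
    have : (K : ℤ) = (a : ℤ) - ⌊μ * (b:ℝ)⌋ := by omega
    exact_mod_cast (congrArg (Int.cast : ℤ → ℝ) this).symm
  rw [hKr]
  have hmainR : (P : ℝ) * K ≤ ((a : ℕ) + bp : ℕ) * G := by exact_mod_cast hmain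
  have hfin : ((K : ℝ)) / ((a : ℝ) + bp) ≤ (G : ℝ) / (P : ℝ) := by
    rw [div_le_div_iff₀ (by positivity) (by exact_mod_cast hPpos)]
    push_cast at hmainR ⊢
    nlinarith [hmainR]
  rw [Finset.filter_congr_decidable]
  exact hfin


open Classical in
theorem weighted_ballot_lower_bound (a b bp : ℕ) (μ : ℝ) (hμ : 0 < μ)
    (ha : 0 < a) (hbp : 0 < bp) (w : Fin bp → ℝ) (hw : ∀ k, 0 < w k)
    (hsum : ∑ k, w k = (b : ℝ)) (hab : μ * b < a) :
    (∀ τ : Fin (a + bp) → Fin (a + bp), Function.Bijective τ →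
      (a : ℤ) - ⌊μ * (b : ℝ)⌋ ≤
        ((Finset.range (a + bp)).filter (fun i =>
          ∀ r, 1 ≤ r → r ≤ a + bp →
            μ * wcountB a bp w (cycf τ i) r < (wcountA a bp (cycf τ i) r : ℝ))).card) ∧
    ((a : ℝ) - (⌊μ * (b : ℝ)⌋ : ℝ)) / ((a : ℝ) + bp) ≤
      (((Finset.univ.filter (fun σ : Equiv.Perm (Fin (a + bp)) =>
          ∀ r, 1 ≤ r → r ≤ a + bp →
            μ * wcountB a bp w (⇑σ) r < (wcountA a bp (⇑σ) r : ℝ))).card : ℝ) /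
        ((Finset.univ : Finset (Equiv.Perm (Fin (a + bp)))).card : ℝ)) :=
  ⟨fun τ hτ => part1 a b bp μ hμ ha hbp w hw hsum hab τ hτ,
   part2 a b bp μ hμ ha hbp w hw hsum hab⟩
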